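/- Let X and Y be separable real Banach spaces satisfying the bounded approximation property witnessed by sequences (S_d) on X and (T_m) on Y of finite-rank continuous linear operators converging pointwise to the respective identities with norms bounded by λ. Let k ∈ ℕ, p ≥ 1, q ≥ 0, and let μ be a finite Borel measure on X × X^k satisfying the Radon–Nikodym domination assumption and ‖μ‖_{k,q,p} := ∫_{X×X^k} (1 + ‖x‖^q) ∏_{j=1}^k (1 + ‖h^j‖^p) dμ < ∞. Let (𝒩_{N,N'}) be a family of finite-dimensional approximators with the Sobolev density property. Then for every k-times continuously Fréchet differentiable F : X → Y admitting a constant C_F with ‖D^i F(x)‖_{L^i(X,Y)}^p ≤ C_F (1 + ‖x‖^q) for all x ∈ X and 0 ≤ i ≤ k, and for every ε > 0, there exist N, N' ∈ ℕ, continuous linear maps E : X → ℝ^N and D : ℝ^{N'} → Y, and f ∈ 𝒩_{N,N'} such that ‖F − D ∘ f ∘ E‖_{W^{k,p}_{B,μ}} < ε. -/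

import Mathlib

open MeasureTheory Filter
open scoped Topology ENNReal NNReal
set_option maxHeartbeats 1000000

/-- The marginal `μ^{0:i}` on `X × X^i` of a measure `μ` on `X × X^k`, for `i ≤ k`. -/
noncomputable def marginalUpTo {X : Type*} [MeasurableSpace X] {k : ℕ}
    (μ : Measure (X × (Fin k → X))) (i : ℕ) (hik : i ≤ k) :
    Measure (X × (Fin i → X)) :=
  μ.map fun z => (z.1, fun j => z.2 (Fin.castLE hik j))

section Helpers

lemma dom_transfer {α β : Type*} [MeasurableSpace α] [MeasurableSpace β]
    (μ' : Measure (α × β)) (w : α × β → ℝ≥0∞) (hw : Measurable w)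
    (c : ℝ≥0∞) (ν : Measure α)
    (hdom : ∀ A : Set α, MeasurableSet A → ∫⁻ z in Prod.fst ⁻¹' A, w z ∂μ' ≤ c * ν A)
    (φ : α → ℝ≥0∞) (hφ : Measurable φ) :
    ∫⁻ z, φ z.1 * w z ∂μ' ≤ c * ∫⁻ a, φ a ∂ν := by
  have h1 : (μ'.withDensity w).map Prod.fst ≤ c • ν := by
    refine Measure.le_intro fun A hA _ => ?_
    rw [Measure.map_apply measurable_fst hA, withDensity_apply _ (measurable_fst hA)]
    simpa using hdom A hA
  calc ∫⁻ z, φ z.1 * w z ∂μ'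
      = ∫⁻ z, φ z.1 ∂(μ'.withDensity w) := by
        have h := lintegral_withDensity_eq_lintegral_mul μ' hw (hφ.comp measurable_fst)
        simp only [Function.comp, Pi.mul_apply] at h
        exact Eq.trans (lintegral_congr fun z => mul_comm _ _) h.symm
    _ = ∫⁻ a, φ a ∂((μ'.withDensity w).map Prod.fst) :=
        (lintegral_map hφ measurable_fst).symm
    _ ≤ ∫⁻ a, φ a ∂(c • ν) := lintegral_mono' h1 le_rfl
    _ = c * ∫⁻ a, φ a ∂ν := lintegral_smul_measure c φ

lemma rpow_add_le_two_rpow (a b : ℝ≥0∞) {p : ℝ} (hp : 0 ≤ p) :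
    (a + b) ^ p ≤ 2 ^ p * (a ^ p + b ^ p) := by
  calc (a + b) ^ p ≤ (2 * max a b) ^ p := by
        apply ENNReal.rpow_le_rpow _ hp
        rw [two_mul]
        exact add_le_add (le_max_left a b) (le_max_right a b)
    _ = 2 ^ p * max a b ^ p := ENNReal.mul_rpow_of_nonneg _ _ hp
    _ ≤ 2 ^ p * (a ^ p + b ^ p) := by
        gcongr
        rcases max_cases a b with ⟨h, _⟩ | ⟨h, _⟩ <;> rw [h]
        · exact le_self_add
        · exact le_add_self

lemma prod_pow_le {k i : ℕ} (hik : i ≤ k) (a : Fin k → ℝ≥0∞) :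
    (∏ r : Fin i, a (Fin.castLE hik r)) ≤ ∏ j : Fin k, (1 + a j) := by
  calc (∏ r : Fin i, a (Fin.castLE hik r)) ≤ ∏ r : Fin i, (1 + a (Fin.castLE hik r)) :=
        Finset.prod_le_prod' fun r _ => le_add_self
    _ = ∏ j ∈ Finset.univ.map (Fin.castLEEmb hik), (1 + a j) := by
        rw [Finset.prod_map]; rfl
    _ ≤ ∏ j : Fin k, (1 + a j) := by
        apply Finset.prod_le_prod_of_subset_of_one_le' (Finset.subset_univ _)
        intro j _ _
        exact le_add_right le_rfl

lemma ofReal_norm_eq_coe_nnnorm {E : Type*} [SeminormedAddGroup E] (a : E) :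
    ENNReal.ofReal ‖a‖ = (‖a‖₊ : ℝ≥0∞) := ENNReal.ofReal_eq_coe_nnreal _

/-- `(‖y‖₊ : ℝ≥0∞) ^ p ≤ ofReal (c ^ p)` from `‖y‖ ≤ c`. -/
lemma ennnorm_rpow_le_of_le {Y : Type*} [SeminormedAddGroup Y] {y : Y} {c p : ℝ}
    (hp : 0 ≤ p) (h : ‖y‖ ≤ c) :
    (‖y‖₊ : ℝ≥0∞) ^ p ≤ ENNReal.ofReal (c ^ p) := by
  rw [← ofReal_norm_eq_coe_nnnorm, ENNReal.ofReal_rpow_of_nonneg (norm_nonneg y) hp]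
  exact ENNReal.ofReal_le_ofReal (Real.rpow_le_rpow (norm_nonneg y) h hp)

/-- Applying a continuous multilinear map: bound on `(‖A h‖₊)^p` in terms of
`ofReal c` whenever `‖A‖ ^ p ≤ c`. -/
lemma ennnorm_multilinear_apply_rpow_le {X Y : Type*}
    [NormedAddCommGroup X] [NormedSpace ℝ X] [NormedAddCommGroup Y] [NormedSpace ℝ Y]
    {i : ℕ} (A : ContinuousMultilinearMap ℝ (fun _ : Fin i => X) Y)
    (h : Fin i → X) {c p : ℝ} (hp : 0 ≤ p) (hA : ‖A‖ ^ p ≤ c) :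
    (‖A h‖₊ : ℝ≥0∞) ^ p ≤ ENNReal.ofReal c * ∏ r, (‖h r‖₊ : ℝ≥0∞) ^ p := by
  have h1 : ‖A h‖ ≤ ‖A‖ * ∏ r, ‖h r‖ := A.le_opNorm h
  have h2 : (‖A h‖₊ : ℝ≥0∞) ^ p ≤ ENNReal.ofReal ((‖A‖ * ∏ r, ‖h r‖) ^ p) :=
    ennnorm_rpow_le_of_le hp h1
  refine h2.trans ?_
  have hprod : (0:ℝ) ≤ ∏ r, ‖h r‖ := Finset.prod_nonneg fun r _ => norm_nonneg _
  rw [Real.mul_rpow (norm_nonneg A) hprod,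
    ENNReal.ofReal_mul (Real.rpow_nonneg (norm_nonneg A) p)]
  refine mul_le_mul' (ENNReal.ofReal_le_ofReal hA) (le_of_eq ?_)
  rw [← Real.finset_prod_rpow _ _ (fun r _ => norm_nonneg _) p,
    ENNReal.ofReal_prod_of_nonneg (fun r _ => Real.rpow_nonneg (norm_nonneg _) p)]
  refine Finset.prod_congr rfl fun r _ => ?_
  rw [← ofReal_norm_eq_coe_nnnorm, ENNReal.ofReal_rpow_of_nonneg (norm_nonneg _) hp]

lemma ennnorm_rpow_le_mul {Y : Type*} {Z : Type*} [SeminormedAddGroup Y]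
    [SeminormedAddGroup Z] {y : Y} {w : Z} {c p : ℝ}
    (hp : 0 ≤ p) (hc : 0 ≤ c) (h : ‖y‖ ≤ c * ‖w‖) :
    (‖y‖₊ : ℝ≥0∞) ^ p ≤ ENNReal.ofReal (c ^ p) * (‖w‖₊ : ℝ≥0∞) ^ p := by
  have h2 := ennnorm_rpow_le_of_le hp h
  rwa [Real.mul_rpow hc (norm_nonneg w), ENNReal.ofReal_mul (Real.rpow_nonneg hc p),
    ← ENNReal.ofReal_rpow_of_nonneg (norm_nonneg w) hp, ofReal_norm_eq_coe_nnnorm] at h2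

lemma ennnorm_rpow_le_mul_prod {Y X : Type*} [SeminormedAddGroup Y]
    [SeminormedAddCommGroup X] {i : ℕ} {y : Y} (h : Fin i → X) {c b p : ℝ}
    (hp : 0 ≤ p) (hc : 0 ≤ c) (hb : 0 ≤ b)
    (hle : ‖y‖ ≤ c * (b * ∏ r, ‖h r‖)) :
    (‖y‖₊ : ℝ≥0∞) ^ p ≤
      ENNReal.ofReal (c ^ p) * (ENNReal.ofReal (b ^ p) * ∏ r, (‖h r‖₊ : ℝ≥0∞) ^ p) := by
  have hprod : (0:ℝ) ≤ ∏ r, ‖h r‖ := Finset.prod_nonneg fun r _ => norm_nonneg _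
  refine (ennnorm_rpow_le_of_le hp hle).trans (le_of_eq ?_)
  rw [Real.mul_rpow hc (by positivity), Real.mul_rpow hb hprod,
    ENNReal.ofReal_mul (by positivity), ENNReal.ofReal_mul (by positivity)]
  congr 1
  congr 1
  rw [← Real.finset_prod_rpow _ _ (fun r _ => norm_nonneg _) p,
    ENNReal.ofReal_prod_of_nonneg (fun r _ => Real.rpow_nonneg (norm_nonneg _) p)]
  refine Finset.prod_congr rfl fun r _ => ?_
  rw [← ofReal_norm_eq_coe_nnnorm, ENNReal.ofReal_rpow_of_nonneg (norm_nonneg _) hp]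

/-- Continuity of `z ↦ D^i φ(z.1)(z.2)` for a `C^k` map `φ` and `i ≤ k`. -/
lemma continuous_iteratedFDeriv_eval {X Y : Type*}
    [NormedAddCommGroup X] [NormedSpace ℝ X] [NormedAddCommGroup Y] [NormedSpace ℝ Y]
    {k i : ℕ} (hik : i ≤ k) {φ : X → Y} (hφ : ContDiff ℝ k φ) :
    Continuous (fun z : X × (Fin i → X) => iteratedFDeriv ℝ i φ z.1 z.2) := by
  have h1 : Continuous (iteratedFDeriv ℝ i φ) :=
    hφ.continuous_iteratedFDeriv (by exact_mod_cast hik)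
  exact continuous_eval.comp ((h1.comp continuous_fst).prodMk continuous_snd)

lemma tendsto_ennnorm_rpow_zero {Y : Type*} [SeminormedAddGroup Y] {u : ℕ → Y}
    (h : Tendsto u atTop (𝓝 0)) {p : ℝ} (hp : 0 < p) :
    Tendsto (fun n => (‖u n‖₊ : ℝ≥0∞) ^ p) atTop (𝓝 0) := by
  have h1 : Tendsto (fun n => (‖u n‖₊ : ℝ≥0∞)) atTop (𝓝 0) := by
    have := (continuous_nnnorm.tendsto (0 : Y)).comp h
    rw [nnnorm_zero] at this
    simpa using ENNReal.tendsto_coe.2 this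
  have h2 := (ENNReal.continuous_rpow_const (y := p)).tendsto 0
  have := h2.comp h1
  rwa [ENNReal.zero_rpow_of_pos hp] at this

end Helpers

/-- universal approximation in the weighted Sobolev norm for maps of
polynomial growth: under the bounded approximation property for separable `X`, `Y`,
finiteness of `‖μ‖_{k,q,p}`, the Radon–Nikodym domination assumption, and a family of
finite-dimensional approximators with the Sobolev density property, every `C^k` map `F`
with `‖D^iF(x)‖^p ≤ C_F(1+‖x‖^q)` can be `ε`-approximated in `‖·‖_{W^{k,p}_{B,μ}}` by an
encoder-decoder architecture `D ∘ f ∘ E` with `f ∈ 𝒩 N N'`. -/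
theorem stmt_14 {X Y : Type*} [NormedAddCommGroup X] [NormedSpace ℝ X] [CompleteSpace X]
    [TopologicalSpace.SeparableSpace X]
    [NormedAddCommGroup Y] [NormedSpace ℝ Y] [CompleteSpace Y]
    [TopologicalSpace.SeparableSpace Y]
    [MeasurableSpace X] [BorelSpace X]
    (S : ℕ → X →L[ℝ] X) (T : ℕ → Y →L[ℝ] Y) (lam : ℝ)
    (hSfr : ∀ d, FiniteDimensional ℝ (LinearMap.range (S d : X →ₗ[ℝ] X)))
    (hTfr : ∀ m, FiniteDimensional ℝ (LinearMap.range (T m : Y →ₗ[ℝ] Y)))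
    (hS : ∀ x : X, Tendsto (fun d => S d x) atTop (𝓝 x))
    (hT : ∀ y : Y, Tendsto (fun m => T m y) atTop (𝓝 y))
    (hSb : ∀ d, ‖S d‖ ≤ lam) (hTb : ∀ m, ‖T m‖ ≤ lam)
    (k : ℕ) (p q : ℝ) (hp : 1 ≤ p) (hq : 0 ≤ q)
    (μ : Measure (X × (Fin k → X))) [IsFiniteMeasure μ]
    (hμ : ∫⁻ z, ENNReal.ofReal (1 + ‖z.1‖ ^ q) *
        ∏ j, (1 + (‖z.2 j‖₊ : ℝ≥0∞) ^ p) ∂μ < ⊤)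
    (C : ℕ → ℝ) (hCpos : ∀ i, 1 ≤ i → i ≤ k → 0 < C i)
    (hRNfin : ∀ i, 1 ≤ i → ∀ hik : i ≤ k,
      ∫⁻ z, ∏ r, (‖z.2 r‖₊ : ℝ≥0∞) ^ p ∂(marginalUpTo μ i hik) < ⊤)
    (hRNdom : ∀ i, 1 ≤ i → ∀ hik : i ≤ k, ∀ A : Set X, MeasurableSet A →
      ∫⁻ z in Prod.fst ⁻¹' A, ∏ r, (‖z.2 r‖₊ : ℝ≥0∞) ^ p ∂(marginalUpTo μ i hik) ≤
        ENNReal.ofReal (C i) * (μ.map Prod.fst) A)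
    (𝒩 : (N N' : ℕ) → Set ((Fin N → ℝ) → (Fin N' → ℝ)))
    (h𝒩smooth : ∀ N N', ∀ f ∈ 𝒩 N N', ContDiff ℝ k f)
    (h𝒩dense : ∀ (N N' : ℕ) (ν : Measure (Fin N → ℝ)), IsFiniteMeasure ν →
      ∀ g : (Fin N → ℝ) → (Fin N' → ℝ), ContDiff ℝ k g →
      (∀ i ≤ k, ∫⁻ y, (‖iteratedFDeriv ℝ i g y‖₊ : ℝ≥0∞) ^ p ∂ν < ⊤) →
      ∀ ε : ℝ, 0 < ε → ∃ f ∈ 𝒩 N N', ∀ i ≤ k,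
        ∫⁻ y, (‖iteratedFDeriv ℝ i g y - iteratedFDeriv ℝ i f y‖₊ : ℝ≥0∞) ^ p ∂ν <
          ENNReal.ofReal (ε ^ p))
    (F : X → Y) (hF : ContDiff ℝ k F)
    (CF : ℝ)
    (hgrowth : ∀ i ≤ k, ∀ x : X, ‖iteratedFDeriv ℝ i F x‖ ^ p ≤ CF * (1 + ‖x‖ ^ q))
    (ε : ℝ) (hε : 0 < ε) :
    ∃ (N N' : ℕ) (E : X →L[ℝ] (Fin N → ℝ)) (D : (Fin N' → ℝ) →L[ℝ] Y)
      (f : (Fin N → ℝ) → (Fin N' → ℝ)), f ∈ 𝒩 N N' ∧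
      ∀ i, ∀ hik : i ≤ k,
        ∫⁻ z,
            (‖iteratedFDeriv ℝ i F z.1 z.2 -
                iteratedFDeriv ℝ i (fun x : X => D (f (E x))) z.1 z.2‖₊ : ℝ≥0∞) ^ p
          ∂(marginalUpTo μ i hik) < ENNReal.ofReal (ε ^ p) := by
  classical
  haveI : SecondCountableTopology X := UniformSpace.secondCountable_of_separable X
  have hp0 : (0:ℝ) < p := lt_of_lt_of_le one_pos hp
  have hppos : (0:ℝ) ≤ p := hp0.le
  have lam0 : (0:ℝ) ≤ lam := (norm_nonneg (S 0)).trans (hSb 0)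
  set L : ℝ := 1 + lam with hLdef
  have hL1 : (1:ℝ) ≤ L := by simp only [hLdef]; linarith
  have hL0 : (0:ℝ) < L := lt_of_lt_of_le one_pos hL1
  -- basic positivity facts
  have hone_q : ∀ x : X, (1:ℝ) ≤ 1 + ‖x‖ ^ q := fun x => by
    nlinarith [Real.rpow_nonneg (norm_nonneg x) q]
  have hCF : 0 ≤ CF := by
    have h0 := hgrowth 0 (Nat.zero_le k) 0
    have h1 := Real.rpow_nonneg (norm_nonneg (iteratedFDeriv ℝ 0 F 0)) p
    nlinarith [hone_q (0 : X)]
  -- operator bounds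
  have hSle : ∀ d (x : X), ‖S d x‖ ≤ L * ‖x‖ := fun d x =>
    ((S d).le_opNorm x).trans (by
      have := hSb d
      nlinarith [norm_nonneg x])
  have hTle : ∀ m (y : Y), ‖T m y‖ ≤ L * ‖y‖ := fun m y =>
    ((T m).le_opNorm y).trans (by
      have := hTb m
      nlinarith [norm_nonneg y])
  -- measurability of the marginal projections
  have mm : ∀ (i : ℕ) (hik : i ≤ k), Measurable
      (fun z : X × (Fin k → X) => (z.1, fun j : Fin i => z.2 (Fin.castLE hik j))) :=
    fun i hik => measurable_fst.prodMk
      (measurable_pi_lambda _ fun j => (measurable_pi_apply _).comp measurable_snd)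
  have hlm : ∀ (i : ℕ) (hik : i ≤ k) (f : X × (Fin i → X) → ℝ≥0∞), Measurable f →
      ∫⁻ z, f z ∂(marginalUpTo μ i hik) =
        ∫⁻ z : X × (Fin k → X), f (z.1, fun j => z.2 (Fin.castLE hik j)) ∂μ :=
    fun i hik f hf => by
      rw [marginalUpTo, lintegral_map hf (mm i hik)]
  -- continuity/measurability of basic integrands
  have hwmeas : ∀ i : ℕ, Measurable
      (fun z : X × (Fin i → X) => ∏ r, (‖z.2 r‖₊ : ℝ≥0∞) ^ p) := by
    intro i
    apply Finset.measurable_prod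
    intro r _
    exact (ENNReal.continuous_rpow_const.comp
      (ENNReal.continuous_coe.comp (continuous_nnnorm.comp
        ((continuous_apply r).comp continuous_snd)))).measurable
  have hxcont : Continuous (fun x : X => ENNReal.ofReal (1 + ‖x‖ ^ q)) :=
    ENNReal.continuous_ofReal.comp
      (continuous_const.add ((Real.continuous_rpow_const hq).comp continuous_norm))
  -- finiteness of the base integrals over the marginals
  have hbase : ∀ (i : ℕ) (hik : i ≤ k),
      ∫⁻ z : X × (Fin i → X), ENNReal.ofReal (1 + ‖z.1‖ ^ q) *
        ∏ r, (‖z.2 r‖₊ : ℝ≥0∞) ^ p ∂(marginalUpTo μ i hik) ≠ ⊤ := by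
    intro i hik
    have hmf : Measurable fun z : X × (Fin i → X) =>
        ENNReal.ofReal (1 + ‖z.1‖ ^ q) * ∏ r, (‖z.2 r‖₊ : ℝ≥0∞) ^ p :=
      ((hxcont.comp continuous_fst).measurable).mul (hwmeas i)
    rw [hlm i hik _ hmf]
    refine ne_top_of_le_ne_top hμ.ne (lintegral_mono fun z => ?_)
    exact mul_le_mul_right (prod_pow_le hik fun j => (‖z.2 j‖₊ : ℝ≥0∞) ^ p) _
  -- the pointwise growth bound, in `ℝ≥0∞`
  have hgrow : ∀ (i : ℕ), i ≤ k → ∀ (x : X) (h : Fin i → X),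
      (‖iteratedFDeriv ℝ i F x h‖₊ : ℝ≥0∞) ^ p ≤
        ENNReal.ofReal (CF * (1 + ‖x‖ ^ q)) * ∏ r, (‖h r‖₊ : ℝ≥0∞) ^ p := by
    intro i hik x h
    exact ennnorm_multilinear_apply_rpow_le _ h hppos (hgrowth i hik x)
  -- the master constant for domination
  set Kd : ℝ≥0∞ := ENNReal.ofReal ((2*L)^p * CF) +
      2^p * (ENNReal.ofReal CF + ENNReal.ofReal (CF * L^q) * ENNReal.ofReal (L^p)^k)
    with hKddef
  have hKdtop : Kd ≠ ⊤ := by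
    simp only [hKddef]
    refine ENNReal.add_ne_top.2 ⟨ENNReal.ofReal_ne_top, ?_⟩
    refine ENNReal.mul_ne_top (by simp [ENNReal.rpow_eq_top_iff]) ?_
    exact ENNReal.add_ne_top.2 ⟨ENNReal.ofReal_ne_top,
      ENNReal.mul_ne_top ENNReal.ofReal_ne_top (by simp [ENNReal.pow_eq_top_iff])⟩
  -- dominated convergence template
  have DCT : ∀ (i : ℕ) (hik : i ≤ k) (G : ℕ → X × (Fin i → X) → Y),
      (∀ n, Continuous (G n)) →
      (∀ n z, (‖G n z‖₊ : ℝ≥0∞) ^ p ≤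
        Kd * (ENNReal.ofReal (1 + ‖z.1‖ ^ q) * ∏ r, (‖z.2 r‖₊ : ℝ≥0∞) ^ p)) →
      (∀ z, Tendsto (fun n => G n z) atTop (𝓝 0)) →
      Tendsto (fun n => ∫⁻ z, (‖G n z‖₊ : ℝ≥0∞) ^ p ∂(marginalUpTo μ i hik)) atTop (𝓝 0) := by
    intro i hik G hGc hGb hGl
    have hmeas : ∀ n, Measurable fun z : X × (Fin i → X) => (‖G n z‖₊ : ℝ≥0∞) ^ p := fun n =>
      (ENNReal.continuous_rpow_const.comp
        (ENNReal.continuous_coe.comp (continuous_nnnorm.comp (hGc n)))).measurable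
    have hfin : ∫⁻ z, Kd * (ENNReal.ofReal (1 + ‖z.1‖ ^ q) *
        ∏ r, (‖z.2 r‖₊ : ℝ≥0∞) ^ p) ∂(marginalUpTo μ i hik) ≠ ⊤ := by
      rw [lintegral_const_mul' _ _ hKdtop]
      exact ENNReal.mul_ne_top hKdtop (hbase i hik)
    have := tendsto_lintegral_of_dominated_convergence (μ := marginalUpTo μ i hik)
      (F := fun n z => (‖G n z‖₊ : ℝ≥0∞) ^ p) (f := fun _ => 0) _ hmeas
      (fun n => Eventually.of_forall (hGb n)) hfin
      (Eventually.of_forall fun z => tendsto_ennnorm_rpow_zero (hGl z) hp0)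
    simpa [lintegral_zero] using this
  have hc3 : (0:ℝ≥0∞) < ENNReal.ofReal ((ε/3) ^ p) :=
    ENNReal.ofReal_pos.2 (Real.rpow_pos_of_pos (by positivity) p)
  -- Step 1: choose m
  have step1 : ∃ m : ℕ, ∀ (i : ℕ) (hik : i ≤ k),
      ∫⁻ z : X × (Fin i → X),
        (‖iteratedFDeriv ℝ i F z.1 z.2 - T m (iteratedFDeriv ℝ i F z.1 z.2)‖₊ : ℝ≥0∞) ^ p
        ∂(marginalUpTo μ i hik) < ENNReal.ofReal ((ε/3) ^ p) := by
    have key1 : ∀ (i : ℕ) (hik : i ≤ k), Tendsto (fun m => ∫⁻ z : X × (Fin i → X),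
        (‖iteratedFDeriv ℝ i F z.1 z.2 - T m (iteratedFDeriv ℝ i F z.1 z.2)‖₊ : ℝ≥0∞) ^ p
        ∂(marginalUpTo μ i hik)) atTop (𝓝 0) := by
      intro i hik
      have hcontΦ : Continuous (fun z : X × (Fin i → X) => iteratedFDeriv ℝ i F z.1 z.2) :=
        continuous_iteratedFDeriv_eval hik hF
      refine DCT i hik _ (fun n => hcontΦ.sub ((T n).continuous.comp hcontΦ)) ?_ ?_
      · intro n z
        have h2L : (0:ℝ) ≤ 2 * L := by linarith
        have hbnd : ‖iteratedFDeriv ℝ i F z.1 z.2 - T n (iteratedFDeriv ℝ i F z.1 z.2)‖ ≤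
            (2*L) * ‖iteratedFDeriv ℝ i F z.1 z.2‖ := by
          have := hTle n (iteratedFDeriv ℝ i F z.1 z.2)
          have := norm_sub_le (iteratedFDeriv ℝ i F z.1 z.2)
            (T n (iteratedFDeriv ℝ i F z.1 z.2))
          nlinarith [norm_nonneg (iteratedFDeriv ℝ i F z.1 z.2)]
        calc (‖iteratedFDeriv ℝ i F z.1 z.2 - T n (iteratedFDeriv ℝ i F z.1 z.2)‖₊ : ℝ≥0∞) ^ p
            ≤ ENNReal.ofReal ((2*L) ^ p) * (‖iteratedFDeriv ℝ i F z.1 z.2‖₊ : ℝ≥0∞) ^ p :=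
              ennnorm_rpow_le_mul hppos h2L hbnd
          _ ≤ ENNReal.ofReal ((2*L) ^ p) *
              (ENNReal.ofReal (CF * (1 + ‖z.1‖ ^ q)) * ∏ r, (‖z.2 r‖₊ : ℝ≥0∞) ^ p) :=
              mul_le_mul_right (hgrow i hik z.1 z.2) _
          _ = ENNReal.ofReal ((2*L) ^ p * CF) *
              (ENNReal.ofReal (1 + ‖z.1‖ ^ q) * ∏ r, (‖z.2 r‖₊ : ℝ≥0∞) ^ p) := by
              rw [ENNReal.ofReal_mul (Real.rpow_nonneg h2L p), ENNReal.ofReal_mul hCF]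
              ring
          _ ≤ Kd * (ENNReal.ofReal (1 + ‖z.1‖ ^ q) * ∏ r, (‖z.2 r‖₊ : ℝ≥0∞) ^ p) :=
              mul_le_mul_left (by rw [hKddef]; exact le_self_add) _
      · intro z
        have := (tendsto_const_nhds (x := iteratedFDeriv ℝ i F z.1 z.2)
          (f := atTop (α := ℕ))).sub (hT (iteratedFDeriv ℝ i F z.1 z.2))
        simpa [sub_self] using this
    have hall : ∀ᶠ m in atTop, ∀ i ∈ Finset.range (k+1), ∀ hik : i ≤ k,
        ∫⁻ z : X × (Fin i → X),
          (‖iteratedFDeriv ℝ i F z.1 z.2 - T m (iteratedFDeriv ℝ i F z.1 z.2)‖₊ : ℝ≥0∞) ^ p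
          ∂(marginalUpTo μ i hik) < ENNReal.ofReal ((ε/3) ^ p) := by
      rw [eventually_all_finset]
      intro i _
      by_cases hik : i ≤ k
      · exact ((key1 i hik).eventually_lt_const hc3).mono fun m h hik' => h
      · exact Eventually.of_forall fun m hik' => absurd hik' hik
    obtain ⟨m, hm⟩ := hall.exists
    exact ⟨m, fun i hik => hm i (Finset.mem_range.2 (Nat.lt_succ_of_le hik)) hik⟩
  obtain ⟨m, hm⟩ := step1
  -- Step 2: choose d
  have step2 : ∃ d : ℕ, ∀ (i : ℕ) (hik : i ≤ k),
      ∫⁻ z : X × (Fin i → X),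
        (‖iteratedFDeriv ℝ i F z.1 z.2 -
          iteratedFDeriv ℝ i F (S d z.1) (fun r => S d (z.2 r))‖₊ : ℝ≥0∞) ^ p
        ∂(marginalUpTo μ i hik) < ENNReal.ofReal ((ε/(3*L)) ^ p) := by
    have hLp1 : (1:ℝ≥0∞) ≤ ENNReal.ofReal (L^p) := by
      rw [ENNReal.one_le_ofReal]
      calc (1:ℝ) = 1 ^ p := (Real.one_rpow p).symm
        _ ≤ L ^ p := Real.rpow_le_rpow zero_le_one hL1 hppos
    have hLq1 : (1:ℝ) ≤ L ^ q := by
      calc (1:ℝ) = 1 ^ q := (Real.one_rpow q).symm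
        _ ≤ L ^ q := Real.rpow_le_rpow zero_le_one hL1 hq
    have key2 : ∀ (i : ℕ) (hik : i ≤ k), Tendsto (fun d => ∫⁻ z : X × (Fin i → X),
        (‖iteratedFDeriv ℝ i F z.1 z.2 -
          iteratedFDeriv ℝ i F (S d z.1) (fun r => S d (z.2 r))‖₊ : ℝ≥0∞) ^ p
        ∂(marginalUpTo μ i hik)) atTop (𝓝 0) := by
      intro i hik
      have hcontΦ : Continuous (fun z : X × (Fin i → X) => iteratedFDeriv ℝ i F z.1 z.2) :=
        continuous_iteratedFDeriv_eval hik hF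
      have hcontS : ∀ d, Continuous (fun z : X × (Fin i → X) =>
          ((S d z.1, fun r => S d (z.2 r)) : X × (Fin i → X))) := fun d =>
        (((S d).continuous.comp continuous_fst).prodMk
          (continuous_pi fun r => (S d).continuous.comp ((continuous_apply r).comp
            continuous_snd)))
      refine DCT i hik _ (fun d => hcontΦ.sub (hcontΦ.comp (hcontS d))) ?_ ?_
      · intro d z
        set a := iteratedFDeriv ℝ i F z.1 z.2 with ha
        set b := iteratedFDeriv ℝ i F (S d z.1) (fun r => S d (z.2 r)) with hb
        have h1 : (‖a - b‖₊ : ℝ≥0∞) ^ p ≤ 2 ^ p * ((‖a‖₊ : ℝ≥0∞) ^ p + (‖b‖₊ : ℝ≥0∞) ^ p) := by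
          refine le_trans (ENNReal.rpow_le_rpow ?_ hppos) (rpow_add_le_two_rpow _ _ hppos)
          exact_mod_cast nnnorm_sub_le a b
        have hta : (‖a‖₊ : ℝ≥0∞) ^ p ≤
            ENNReal.ofReal CF * (ENNReal.ofReal (1 + ‖z.1‖ ^ q) *
              ∏ r, (‖z.2 r‖₊ : ℝ≥0∞) ^ p) := by
          refine le_trans (hgrow i hik z.1 z.2) (le_of_eq ?_)
          rw [ENNReal.ofReal_mul hCF, mul_assoc]
        have hgq : 1 + ‖S d z.1‖ ^ q ≤ L ^ q * (1 + ‖z.1‖ ^ q) := by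
          have h3 : ‖S d z.1‖ ^ q ≤ L ^ q * ‖z.1‖ ^ q := by
            calc ‖S d z.1‖ ^ q ≤ (L * ‖z.1‖) ^ q :=
                  Real.rpow_le_rpow (norm_nonneg _) (hSle d z.1) hq
              _ = L ^ q * ‖z.1‖ ^ q := Real.mul_rpow hL0.le (norm_nonneg _)
          nlinarith [Real.rpow_nonneg (norm_nonneg z.1) q]
        have htb : (‖b‖₊ : ℝ≥0∞) ^ p ≤
            ENNReal.ofReal (CF * L ^ q) * ENNReal.ofReal (L^p) ^ k *
              (ENNReal.ofReal (1 + ‖z.1‖ ^ q) * ∏ r, (‖z.2 r‖₊ : ℝ≥0∞) ^ p) := by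
          have hb1 : (‖b‖₊ : ℝ≥0∞) ^ p ≤
              ENNReal.ofReal (CF * L ^ q * (1 + ‖z.1‖ ^ q)) *
                ∏ r, (‖S d (z.2 r)‖₊ : ℝ≥0∞) ^ p := by
            refine ennnorm_multilinear_apply_rpow_le _ _ hppos ?_
            calc ‖iteratedFDeriv ℝ i F (S d z.1)‖ ^ p ≤ CF * (1 + ‖S d z.1‖ ^ q) :=
                  hgrowth i hik (S d z.1)
              _ ≤ CF * L ^ q * (1 + ‖z.1‖ ^ q) := by nlinarith
          have hb2 : (∏ r, (‖S d (z.2 r)‖₊ : ℝ≥0∞) ^ p) ≤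
              ENNReal.ofReal (L^p) ^ k * ∏ r, (‖z.2 r‖₊ : ℝ≥0∞) ^ p := by
            calc (∏ r, (‖S d (z.2 r)‖₊ : ℝ≥0∞) ^ p)
                ≤ ∏ r : Fin i, (ENNReal.ofReal (L^p) * (‖z.2 r‖₊ : ℝ≥0∞) ^ p) :=
                  Finset.prod_le_prod' fun r _ =>
                    ennnorm_rpow_le_mul hppos hL0.le (hSle d (z.2 r))
              _ = ENNReal.ofReal (L^p) ^ i * ∏ r, (‖z.2 r‖₊ : ℝ≥0∞) ^ p := by
                  rw [Finset.prod_mul_distrib, Finset.prod_const, Finset.card_univ,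
                    Fintype.card_fin]
              _ ≤ ENNReal.ofReal (L^p) ^ k * ∏ r, (‖z.2 r‖₊ : ℝ≥0∞) ^ p := by
                  gcongr
          calc (‖b‖₊ : ℝ≥0∞) ^ p
              ≤ ENNReal.ofReal (CF * L ^ q * (1 + ‖z.1‖ ^ q)) *
                (ENNReal.ofReal (L^p) ^ k * ∏ r, (‖z.2 r‖₊ : ℝ≥0∞) ^ p) :=
                hb1.trans (mul_le_mul_right hb2 _)
            _ = ENNReal.ofReal (CF * L ^ q) * ENNReal.ofReal (L^p) ^ k *
                (ENNReal.ofReal (1 + ‖z.1‖ ^ q) * ∏ r, (‖z.2 r‖₊ : ℝ≥0∞) ^ p) := by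
                rw [ENNReal.ofReal_mul (by positivity)]
                ring
        calc (‖a - b‖₊ : ℝ≥0∞) ^ p
            ≤ 2 ^ p * ((‖a‖₊ : ℝ≥0∞) ^ p + (‖b‖₊ : ℝ≥0∞) ^ p) := h1
          _ ≤ 2 ^ p * ((ENNReal.ofReal CF +
                ENNReal.ofReal (CF * L ^ q) * ENNReal.ofReal (L^p) ^ k) *
               (ENNReal.ofReal (1 + ‖z.1‖ ^ q) * ∏ r, (‖z.2 r‖₊ : ℝ≥0∞) ^ p)) := by
              rw [add_mul]
              exact mul_le_mul_right (add_le_add hta (by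
                refine le_trans htb (le_of_eq ?_); ring)) _
          _ = (2 ^ p * (ENNReal.ofReal CF +
                ENNReal.ofReal (CF * L ^ q) * ENNReal.ofReal (L^p) ^ k)) *
               (ENNReal.ofReal (1 + ‖z.1‖ ^ q) * ∏ r, (‖z.2 r‖₊ : ℝ≥0∞) ^ p) := by
              ring
          _ ≤ Kd * (ENNReal.ofReal (1 + ‖z.1‖ ^ q) * ∏ r, (‖z.2 r‖₊ : ℝ≥0∞) ^ p) :=
              mul_le_mul_left (by rw [hKddef]; exact le_add_self) _
      · intro z
        have hz : Tendsto (fun d => ((S d z.1, fun r => S d (z.2 r)) : X × (Fin i → X)))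
            atTop (𝓝 z) := by
          have := (hS z.1).prodMk_nhds (tendsto_pi_nhds.2 fun r => hS (z.2 r))
          simpa using this
        have h2 := (hcontΦ.tendsto z).comp hz
        have := (tendsto_const_nhds (x := iteratedFDeriv ℝ i F z.1 z.2)
          (f := atTop (α := ℕ))).sub h2
        simpa [sub_self] using this
    have hc3L : (0:ℝ≥0∞) < ENNReal.ofReal ((ε/(3*L)) ^ p) := by
      refine ENNReal.ofReal_pos.2 (Real.rpow_pos_of_pos ?_ p)
      positivity
    have hall : ∀ᶠ d in atTop, ∀ i ∈ Finset.range (k+1), ∀ hik : i ≤ k,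
        ∫⁻ z : X × (Fin i → X),
          (‖iteratedFDeriv ℝ i F z.1 z.2 -
            iteratedFDeriv ℝ i F (S d z.1) (fun r => S d (z.2 r))‖₊ : ℝ≥0∞) ^ p
          ∂(marginalUpTo μ i hik) < ENNReal.ofReal ((ε/(3*L)) ^ p) := by
      rw [eventually_all_finset]
      intro i _
      by_cases hik : i ≤ k
      · exact ((key2 i hik).eventually_lt_const hc3L).mono fun d h hik' => h
      · exact Eventually.of_forall fun d hik' => absurd hik' hik
    obtain ⟨d, hd⟩ := hall.exists
    exact ⟨d, fun i hik => hd i (Finset.mem_range.2 (Nat.lt_succ_of_le hik)) hik⟩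
  obtain ⟨d, hd⟩ := step2
  -- finite-dimensional reduction
  haveI := hSfr d
  haveI := hTfr m
  set V := LinearMap.range (S d : X →ₗ[ℝ] X) with hV
  set W := LinearMap.range (T m : Y →ₗ[ℝ] Y) with hW
  set N := Module.finrank ℝ V with hN
  set N' := Module.finrank ℝ W with hN'
  let eX : V ≃L[ℝ] (Fin N → ℝ) := (Module.finBasis ℝ V).equivFun.toContinuousLinearEquiv
  let eY : W ≃L[ℝ] (Fin N' → ℝ) := (Module.finBasis ℝ W).equivFun.toContinuousLinearEquiv
  let E : X →L[ℝ] (Fin N → ℝ) := (eX : V →L[ℝ] (Fin N → ℝ)).comp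
    ((S d).codRestrict V fun x => LinearMap.mem_range_self _ x)
  let D : (Fin N' → ℝ) →L[ℝ] Y := (Submodule.subtypeL W).comp
    (eY.symm : (Fin N' → ℝ) →L[ℝ] W)
  let L1 : (Fin N → ℝ) →L[ℝ] X := (Submodule.subtypeL V).comp
    (eX.symm : (Fin N → ℝ) →L[ℝ] V)
  let L2 : Y →L[ℝ] (Fin N' → ℝ) := (eY : W →L[ℝ] (Fin N' → ℝ)).comp
    ((T m).codRestrict W fun y => LinearMap.mem_range_self _ y)
  have hL1E : ∀ x : X, L1 (E x) = S d x := by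
    intro x
    simp [L1, E]
  have hDL2 : ∀ y : Y, D (L2 y) = T m y := by
    intro y
    simp [D, L2]
  set g : (Fin N → ℝ) → (Fin N' → ℝ) := fun v => L2 (F (L1 v)) with hgdef
  have hg : ContDiff ℝ k g := L2.contDiff.comp (hF.comp L1.contDiff)
  have hDgE : ∀ x : X, D (g (E x)) = T m (F (S d x)) := by
    intro x
    rw [hgdef]
    simp only [hL1E x, hDL2]
  -- chain rule identity for encoder-decoder compositions
  have hchain : ∀ (φ : (Fin N → ℝ) → (Fin N' → ℝ)), ContDiff ℝ k φ →
      ∀ (i : ℕ), i ≤ k → ∀ (x : X) (v : Fin i → X),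
      iteratedFDeriv ℝ i (fun x : X => D (φ (E x))) x v =
        D (iteratedFDeriv ℝ i φ (E x) (fun r => E (v r))) := by
    intro φ hφ i hik x v
    have hin : (i : WithTop ℕ∞) ≤ ((k : ℕ∞) : WithTop ℕ∞) := by exact_mod_cast hik
    have hfun : (fun x : X => D (φ (E x))) = (D ∘ (φ ∘ E)) := rfl
    rw [hfun, D.iteratedFDeriv_comp_left ((hφ.comp E.contDiff)).contDiffAt hin]
    rw [ContinuousLinearMap.compContinuousMultilinearMap_coe]
    simp only [Function.comp_apply]
    rw [E.iteratedFDeriv_comp_right hφ x hin]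
    rfl
  -- chain rule identity for `T m ∘ F ∘ S d`
  have hchainG : ∀ (i : ℕ), i ≤ k → ∀ (x : X) (v : Fin i → X),
      iteratedFDeriv ℝ i (fun x : X => T m (F (S d x))) x v =
        T m (iteratedFDeriv ℝ i F (S d x) (fun r => S d (v r))) := by
    intro i hik x v
    have hin : (i : WithTop ℕ∞) ≤ ((k : ℕ∞) : WithTop ℕ∞) := by exact_mod_cast hik
    have hfun : (fun x : X => T m (F (S d x))) = ((T m) ∘ (F ∘ (S d))) := rfl
    rw [hfun, (T m).iteratedFDeriv_comp_left (hF.comp (S d).contDiff).contDiffAt hin]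
    rw [ContinuousLinearMap.compContinuousMultilinearMap_coe]
    simp only [Function.comp_apply]
    rw [(S d).iteratedFDeriv_comp_right hF x hin]
    rfl
  -- chain rule for `g`, at the level of multilinear maps
  have hchaing : ∀ (i : ℕ), i ≤ k → ∀ y : Fin N → ℝ,
      iteratedFDeriv ℝ i g y = L2.compContinuousMultilinearMap
        ((iteratedFDeriv ℝ i F (L1 y)).compContinuousLinearMap fun _ => L1) := by
    intro i hik y
    have hin : (i : WithTop ℕ∞) ≤ ((k : ℕ∞) : WithTop ℕ∞) := by exact_mod_cast hik
    have hfun : g = (L2 ∘ (F ∘ L1)) := rfl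
    rw [hfun, L2.iteratedFDeriv_comp_left (hF.comp L1.contDiff).contDiffAt hin,
      L1.iteratedFDeriv_comp_right hF y hin]
  -- the measures
  set μ0 : Measure X := μ.map Prod.fst with hμ0
  haveI : IsFiniteMeasure μ0 := by
    constructor
    rw [hμ0, Measure.map_apply measurable_fst MeasurableSet.univ]
    exact measure_lt_top μ _
  have hEmeas : Measurable E := E.continuous.measurable
  set ν : Measure (Fin N → ℝ) := μ0.map E with hν
  haveI hνfin : IsFiniteMeasure ν := by
    constructor
    rw [hν, Measure.map_apply hEmeas MeasurableSet.univ]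
    exact measure_lt_top μ0 _
  have hlm0 : ∀ φ : X → ℝ≥0∞, Measurable φ →
      ∫⁻ x, φ x ∂μ0 = ∫⁻ z : X × (Fin k → X), φ z.1 ∂μ := fun φ hφ =>
    lintegral_map hφ measurable_fst
  have hlmν : ∀ φ : (Fin N → ℝ) → ℝ≥0∞, Measurable φ →
      ∫⁻ y, φ y ∂ν = ∫⁻ x, φ (E x) ∂μ0 := fun φ hφ =>
    lintegral_map hφ hEmeas
  -- finiteness of the base integral over μ0
  have hbase0 : ∫⁻ x, ENNReal.ofReal (1 + ‖x‖ ^ q) ∂μ0 ≠ ⊤ := by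
    rw [hlm0 _ hxcont.measurable]
    refine ne_top_of_le_ne_top hμ.ne (lintegral_mono fun z => ?_)
    refine le_mul_of_one_le_right' (Finset.one_le_prod' fun j _ => le_self_add)
  -- growth transfer bound
  have hSq : ∀ x : X, 1 + ‖S d x‖ ^ q ≤ L ^ q * (1 + ‖x‖ ^ q) := by
    intro x
    have hLq1 : (1:ℝ) ≤ L ^ q := by
      calc (1:ℝ) = 1 ^ q := (Real.one_rpow q).symm
        _ ≤ L ^ q := Real.rpow_le_rpow zero_le_one hL1 hq
    have h3 : ‖S d x‖ ^ q ≤ L ^ q * ‖x‖ ^ q := by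
      calc ‖S d x‖ ^ q ≤ (L * ‖x‖) ^ q :=
            Real.rpow_le_rpow (norm_nonneg _) (hSle d x) hq
        _ = L ^ q * ‖x‖ ^ q := Real.mul_rpow hL0.le (norm_nonneg _)
    nlinarith [Real.rpow_nonneg (norm_nonneg x) q]
  -- integrability of the derivatives of g with respect to ν
  have hgcont : ∀ i : ℕ, i ≤ k → Continuous (iteratedFDeriv ℝ i g) := fun i hik =>
    hg.continuous_iteratedFDeriv (by exact_mod_cast hik)
  have hgint : ∀ i ≤ k, ∫⁻ y, (‖iteratedFDeriv ℝ i g y‖₊ : ℝ≥0∞) ^ p ∂ν < ⊤ := by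
    intro i hik
    have hmi : Measurable fun y => (‖iteratedFDeriv ℝ i g y‖₊ : ℝ≥0∞) ^ p :=
      (ENNReal.continuous_rpow_const.comp
        (ENNReal.continuous_coe.comp (continuous_nnnorm.comp (hgcont i hik)))).measurable
    rw [hlmν _ hmi]
    have hptw : ∀ x : X, (‖iteratedFDeriv ℝ i g (E x)‖₊ : ℝ≥0∞) ^ p ≤
        ENNReal.ofReal ((‖L2‖ * ‖L1‖ ^ i) ^ p * (CF * L ^ q)) *
          ENNReal.ofReal (1 + ‖x‖ ^ q) := by
      intro x
      have hn1 : ‖iteratedFDeriv ℝ i g (E x)‖ ≤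
          (‖L2‖ * ‖L1‖ ^ i) * ‖iteratedFDeriv ℝ i F (S d x)‖ := by
        rw [hchaing i hik (E x), hL1E x]
        set A := iteratedFDeriv ℝ i F (S d x) with hA
        set B := A.compContinuousLinearMap (fun _ : Fin i => L1) with hB
        calc ‖L2.compContinuousMultilinearMap B‖
            ≤ ‖L2‖ * ‖B‖ := ContinuousLinearMap.norm_compContinuousMultilinearMap_le _ _
          _ ≤ ‖L2‖ * (‖A‖ * ∏ _r : Fin i, ‖L1‖) :=
              mul_le_mul_of_nonneg_left
                (ContinuousMultilinearMap.norm_compContinuousLinearMap_le _ _)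
                (norm_nonneg L2)
          _ = (‖L2‖ * ‖L1‖ ^ i) * ‖A‖ := by
              rw [Finset.prod_const, Finset.card_univ, Fintype.card_fin]
              ring
      have h2 : (‖iteratedFDeriv ℝ i g (E x)‖₊ : ℝ≥0∞) ^ p ≤
          ENNReal.ofReal ((‖L2‖ * ‖L1‖ ^ i) ^ p) *
            (‖iteratedFDeriv ℝ i F (S d x)‖₊ : ℝ≥0∞) ^ p :=
        ennnorm_rpow_le_mul hppos (by positivity) hn1
      refine h2.trans ?_
      have h3 : (‖iteratedFDeriv ℝ i F (S d x)‖₊ : ℝ≥0∞) ^ p ≤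
          ENNReal.ofReal ((CF * L ^ q) * (1 + ‖x‖ ^ q)) := by
        refine ennnorm_rpow_le_of_le hppos (le_refl _) |>.trans ?_
        refine ENNReal.ofReal_le_ofReal ?_
        calc ‖iteratedFDeriv ℝ i F (S d x)‖ ^ p ≤ CF * (1 + ‖S d x‖ ^ q) :=
              hgrowth i hik (S d x)
          _ ≤ (CF * L ^ q) * (1 + ‖x‖ ^ q) := by nlinarith [hSq x, hone_q x]
      refine (mul_le_mul_right h3 _).trans (le_of_eq ?_)
      rw [← ENNReal.ofReal_mul (by positivity), ← ENNReal.ofReal_mul (by positivity)]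
      congr 1
      ring
    calc ∫⁻ x, (‖iteratedFDeriv ℝ i g (E x)‖₊ : ℝ≥0∞) ^ p ∂μ0
        ≤ ∫⁻ x, ENNReal.ofReal ((‖L2‖ * ‖L1‖ ^ i) ^ p * (CF * L ^ q)) *
            ENNReal.ofReal (1 + ‖x‖ ^ q) ∂μ0 := lintegral_mono hptw
      _ = ENNReal.ofReal ((‖L2‖ * ‖L1‖ ^ i) ^ p * (CF * L ^ q)) *
            ∫⁻ x, ENNReal.ofReal (1 + ‖x‖ ^ q) ∂μ0 :=
          lintegral_const_mul' _ _ ENNReal.ofReal_ne_top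
      _ < ⊤ := ENNReal.mul_lt_top ENNReal.ofReal_lt_top hbase0.lt_top
  -- uniform domination constants, including `i = 0`
  set Ci : ℕ → ℝ := fun i => if i = 0 then 1 else C i with hCidef
  have hCipos : ∀ i, i ≤ k → 0 < Ci i := by
    intro i hik
    rcases Nat.eq_zero_or_pos i with h0 | h1
    · subst h0; simp [hCidef]
    · simp only [hCidef, if_neg (Nat.pos_iff_ne_zero.1 h1)]
      exact hCpos i h1 hik
  have hdom' : ∀ (i : ℕ) (hik : i ≤ k) (A : Set X), MeasurableSet A →
      ∫⁻ z in Prod.fst ⁻¹' A, ∏ r, (‖z.2 r‖₊ : ℝ≥0∞) ^ p ∂(marginalUpTo μ i hik) ≤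
        ENNReal.ofReal (Ci i) * μ0 A := by
    intro i hik A hA
    rcases Nat.eq_zero_or_pos i with h0 | h1
    · subst h0
      simp only [hCidef, if_pos rfl, ENNReal.ofReal_one, one_mul]
      calc ∫⁻ z in Prod.fst ⁻¹' A, ∏ r : Fin 0, (‖z.2 r‖₊ : ℝ≥0∞) ^ p
            ∂(marginalUpTo μ 0 hik)
          = ∫⁻ _z in Prod.fst ⁻¹' A, (1:ℝ≥0∞) ∂(marginalUpTo μ 0 hik) :=
            lintegral_congr fun z => by simp
        _ = marginalUpTo μ 0 hik (Prod.fst ⁻¹' A) := setLIntegral_one _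
        _ = μ0 A := by
            rw [marginalUpTo, Measure.map_apply (mm 0 hik) (measurable_fst hA), hμ0,
              Measure.map_apply measurable_fst hA]
            rfl
        _ ≤ μ0 A := le_rfl
    · simp only [hCidef, if_neg (Nat.pos_iff_ne_zero.1 h1)]
      exact hRNdom i h1 hik A hA
  -- the constants controlling the third error term
  set c3 : ℝ := (1 + ‖D‖) * (1 + ‖E‖) ^ k with hc3def
  have hc3pos : 0 < c3 := by positivity
  have hc3i : ∀ i, i ≤ k → ‖D‖ * ‖E‖ ^ i ≤ c3 := by
    intro i hik
    have h1 : ‖E‖ ^ i ≤ (1 + ‖E‖) ^ k := by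
      calc ‖E‖ ^ i ≤ (1 + ‖E‖) ^ i :=
            pow_le_pow_left₀ (norm_nonneg E) (by linarith) i
        _ ≤ (1 + ‖E‖) ^ k := pow_le_pow_right₀ (by nlinarith [norm_nonneg E]) hik
    have h2 : (0:ℝ) ≤ ‖E‖ ^ i := pow_nonneg (norm_nonneg E) i
    nlinarith [norm_nonneg D, norm_nonneg E]
  set cC : ℝ := 1 + ∑ j ∈ Finset.range (k+1), |C j| with hcCdef
  have hcC1 : 1 ≤ cC := le_add_of_nonneg_right
    (Finset.sum_nonneg fun j _ => abs_nonneg _)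
  have hcCi : ∀ i, i ≤ k → Ci i ≤ cC := by
    intro i hik
    rcases Nat.eq_zero_or_pos i with h0 | h1
    · subst h0; simpa [hCidef] using hcC1
    · simp only [hCidef, if_neg (Nat.pos_iff_ne_zero.1 h1)]
      calc C i ≤ |C i| := le_abs_self _
        _ ≤ ∑ j ∈ Finset.range (k+1), |C j| :=
            Finset.single_le_sum (fun j _ => abs_nonneg (C j))
              (Finset.mem_range.2 (Nat.lt_succ_of_le hik))
        _ ≤ cC := by rw [hcCdef]; linarith
  set Kr : ℝ := c3 ^ p * cC with hKrdef
  have hKrpos : 0 < Kr := by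
    have h1 := Real.rpow_pos_of_pos hc3pos p
    rw [hKrdef]
    nlinarith
  set δ : ℝ := (ε/3) / Kr ^ (1/p) with hδdef
  have hKr1p : 0 < Kr ^ (1/p) := Real.rpow_pos_of_pos hKrpos _
  have hδpos : 0 < δ := by
    rw [hδdef]
    positivity
  have hδp : δ ^ p = (ε/3) ^ p / Kr := by
    have hKrp : (Kr ^ (1/p)) ^ p = Kr := by
      rw [← Real.rpow_mul hKrpos.le, one_div_mul_cancel hp0.ne', Real.rpow_one]
    rw [hδdef, Real.div_rpow (by positivity) hKr1p.le, hKrp]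
  -- apply the density of the approximator family
  obtain ⟨f, hf𝒩, hferr⟩ := h𝒩dense N N' ν hνfin g hg hgint δ hδpos
  have hfC : ContDiff ℝ k f := h𝒩smooth N N' f hf𝒩
  refine ⟨N, N', E, D, f, hf𝒩, ?_⟩
  intro i hik
  -- terms of the decomposition
  have hGC : ContDiff ℝ k (fun x : X => T m (F (S d x))) :=
    (T m).contDiff.comp (hF.comp (S d).contDiff)
  have hcCdiff : ContDiff ℝ k (fun x : X => D (f (E x))) :=
    D.contDiff.comp (hfC.comp E.contDiff)
  have hconta : Continuous (fun z : X × (Fin i → X) => iteratedFDeriv ℝ i F z.1 z.2) :=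
    continuous_iteratedFDeriv_eval hik hF
  have hcontb2 : Continuous (fun z : X × (Fin i → X) =>
      iteratedFDeriv ℝ i (fun x : X => T m (F (S d x))) z.1 z.2) :=
    continuous_iteratedFDeriv_eval hik hGC
  have hcontc : Continuous (fun z : X × (Fin i → X) =>
      iteratedFDeriv ℝ i (fun x : X => D (f (E x))) z.1 z.2) :=
    continuous_iteratedFDeriv_eval hik hcCdiff
  set f1 : X × (Fin i → X) → ℝ≥0∞ := fun z =>
    (‖iteratedFDeriv ℝ i F z.1 z.2 - T m (iteratedFDeriv ℝ i F z.1 z.2)‖₊ : ℝ≥0∞)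
    with hf1def
  set f2 : X × (Fin i → X) → ℝ≥0∞ := fun z =>
    (‖T m (iteratedFDeriv ℝ i F z.1 z.2) -
      iteratedFDeriv ℝ i (fun x : X => T m (F (S d x))) z.1 z.2‖₊ : ℝ≥0∞) with hf2def
  set f3 : X × (Fin i → X) → ℝ≥0∞ := fun z =>
    (‖iteratedFDeriv ℝ i (fun x : X => T m (F (S d x))) z.1 z.2 -
      iteratedFDeriv ℝ i (fun x : X => D (f (E x))) z.1 z.2‖₊ : ℝ≥0∞) with hf3def
  have hmf1 : Measurable f1 := (ENNReal.continuous_coe.comp (continuous_nnnorm.comp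
    (hconta.sub ((T m).continuous.comp hconta)))).measurable
  have hmf2 : Measurable f2 := (ENNReal.continuous_coe.comp (continuous_nnnorm.comp
    (((T m).continuous.comp hconta).sub hcontb2))).measurable
  have hmf3 : Measurable f3 := (ENNReal.continuous_coe.comp (continuous_nnnorm.comp
    (hcontb2.sub hcontc))).measurable
  set t : ℝ≥0∞ := ENNReal.ofReal ((ε/3) ^ p) with htdef
  have httop : t ≠ ⊤ := ENNReal.ofReal_ne_top
  -- first error term
  have hJ1 : ∫⁻ z, (f1 z) ^ p ∂(marginalUpTo μ i hik) < t := hm i hik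
  -- second error term
  have hJ2 : ∫⁻ z, (f2 z) ^ p ∂(marginalUpTo μ i hik) < t := by
    have hptw : ∀ z : X × (Fin i → X), (f2 z) ^ p ≤ ENNReal.ofReal (L ^ p) *
        (‖iteratedFDeriv ℝ i F z.1 z.2 -
          iteratedFDeriv ℝ i F (S d z.1) (fun r => S d (z.2 r))‖₊ : ℝ≥0∞) ^ p := by
      intro z
      have heq : T m (iteratedFDeriv ℝ i F z.1 z.2) -
          iteratedFDeriv ℝ i (fun x : X => T m (F (S d x))) z.1 z.2 =
          T m (iteratedFDeriv ℝ i F z.1 z.2 -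
            iteratedFDeriv ℝ i F (S d z.1) (fun r => S d (z.2 r))) := by
        rw [hchainG i hik z.1 z.2, map_sub]
      refine ennnorm_rpow_le_mul hppos hL0.le ?_
      rw [heq]
      exact hTle m _
    calc ∫⁻ z, (f2 z) ^ p ∂(marginalUpTo μ i hik)
        ≤ ∫⁻ z, ENNReal.ofReal (L ^ p) *
            (‖iteratedFDeriv ℝ i F z.1 z.2 -
              iteratedFDeriv ℝ i F (S d z.1) (fun r => S d (z.2 r))‖₊ : ℝ≥0∞) ^ p
            ∂(marginalUpTo μ i hik) := lintegral_mono hptw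
      _ = ENNReal.ofReal (L ^ p) * ∫⁻ z,
            (‖iteratedFDeriv ℝ i F z.1 z.2 -
              iteratedFDeriv ℝ i F (S d z.1) (fun r => S d (z.2 r))‖₊ : ℝ≥0∞) ^ p
            ∂(marginalUpTo μ i hik) := lintegral_const_mul' _ _ ENNReal.ofReal_ne_top
      _ < ENNReal.ofReal (L ^ p) * ENNReal.ofReal ((ε/(3*L)) ^ p) := by
          refine ENNReal.mul_lt_mul_right ?_ ENNReal.ofReal_ne_top (hd i hik)
          exact (ENNReal.ofReal_pos.2 (Real.rpow_pos_of_pos hL0 p)).ne'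
      _ = t := by
          rw [htdef, ← ENNReal.ofReal_mul (Real.rpow_nonneg hL0.le p),
            ← Real.mul_rpow hL0.le (by positivity)]
          congr 2
          field_simp
  -- third error term
  have hJ3 : ∫⁻ z, (f3 z) ^ p ∂(marginalUpTo μ i hik) ≤ t := by
    have hb2c : ∀ z : X × (Fin i → X),
        iteratedFDeriv ℝ i (fun x : X => T m (F (S d x))) z.1 z.2 -
          iteratedFDeriv ℝ i (fun x : X => D (f (E x))) z.1 z.2 =
        D ((iteratedFDeriv ℝ i g (E z.1) - iteratedFDeriv ℝ i f (E z.1))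
          (fun r => E (z.2 r))) := by
      intro z
      have hGeq : (fun x : X => T m (F (S d x))) = (fun x : X => D (g (E x))) :=
        funext fun x => (hDgE x).symm
      rw [hGeq, hchain g hg i hik z.1 z.2, hchain f hfC i hik z.1 z.2,
        ContinuousMultilinearMap.sub_apply, map_sub]
    set Δp : X → ℝ≥0∞ := fun x =>
      (‖iteratedFDeriv ℝ i g (E x) - iteratedFDeriv ℝ i f (E x)‖₊ : ℝ≥0∞) ^ p with hΔdef
    have hcontΔ : Continuous fun x : X =>
        iteratedFDeriv ℝ i g (E x) - iteratedFDeriv ℝ i f (E x) :=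
      ((hgcont i hik).comp E.continuous).sub
        ((hfC.continuous_iteratedFDeriv (by exact_mod_cast hik)).comp E.continuous)
    have hΔmeas : Measurable Δp :=
      (ENNReal.continuous_rpow_const.comp (ENNReal.continuous_coe.comp
        (continuous_nnnorm.comp hcontΔ))).measurable
    have hptw : ∀ z : X × (Fin i → X), (f3 z) ^ p ≤
        ENNReal.ofReal (c3 ^ p) * (Δp z.1 * ∏ r, (‖z.2 r‖₊ : ℝ≥0∞) ^ p) := by
      intro z
      have hreal : ‖D ((iteratedFDeriv ℝ i g (E z.1) - iteratedFDeriv ℝ i f (E z.1))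
          (fun r => E (z.2 r)))‖ ≤ c3 *
            (‖iteratedFDeriv ℝ i g (E z.1) - iteratedFDeriv ℝ i f (E z.1)‖ *
              ∏ r, ‖z.2 r‖) := by
        set Δ := iteratedFDeriv ℝ i g (E z.1) - iteratedFDeriv ℝ i f (E z.1) with hΔ
        calc ‖D (Δ (fun r => E (z.2 r)))‖ ≤ ‖D‖ * ‖Δ (fun r => E (z.2 r))‖ :=
              D.le_opNorm _
          _ ≤ ‖D‖ * (‖Δ‖ * ∏ r, ‖E (z.2 r)‖) := by
              refine mul_le_mul_of_nonneg_left (Δ.le_opNorm _) (norm_nonneg D)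
          _ ≤ ‖D‖ * (‖Δ‖ * ∏ r : Fin i, (‖E‖ * ‖z.2 r‖)) := by
              refine mul_le_mul_of_nonneg_left (mul_le_mul_of_nonneg_left
                (Finset.prod_le_prod (fun r _ => norm_nonneg _)
                  (fun r _ => E.le_opNorm _)) (norm_nonneg Δ)) (norm_nonneg D)
          _ = (‖D‖ * ‖E‖ ^ i) * (‖Δ‖ * ∏ r, ‖z.2 r‖) := by
              rw [Finset.prod_mul_distrib, Finset.prod_const, Finset.card_univ,
                Fintype.card_fin]
              ring
          _ ≤ c3 * (‖Δ‖ * ∏ r, ‖z.2 r‖) := by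
              refine mul_le_mul_of_nonneg_right (hc3i i hik) ?_
              positivity
      have h2 := ennnorm_rpow_le_mul_prod (y :=
          D ((iteratedFDeriv ℝ i g (E z.1) - iteratedFDeriv ℝ i f (E z.1))
            (fun r => E (z.2 r)))) z.2 hppos hc3pos.le (norm_nonneg _) hreal
      have h3 : ENNReal.ofReal
          (‖iteratedFDeriv ℝ i g (E z.1) - iteratedFDeriv ℝ i f (E z.1)‖ ^ p) =
          Δp z.1 := by
        simp only [hΔdef]
        rw [← ofReal_norm_eq_coe_nnnorm,
          ENNReal.ofReal_rpow_of_nonneg (norm_nonneg _) hppos]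
      have h4 : f3 z = (‖D ((iteratedFDeriv ℝ i g (E z.1) -
          iteratedFDeriv ℝ i f (E z.1)) (fun r => E (z.2 r)))‖₊ : ℝ≥0∞) := by
        simp only [hf3def]
        rw [hb2c z]
      rw [h4]
      exact h2.trans (le_of_eq (by rw [h3]))
    calc ∫⁻ z, (f3 z) ^ p ∂(marginalUpTo μ i hik)
        ≤ ∫⁻ z, ENNReal.ofReal (c3 ^ p) *
            (Δp z.1 * ∏ r, (‖z.2 r‖₊ : ℝ≥0∞) ^ p) ∂(marginalUpTo μ i hik) :=
          lintegral_mono hptw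
      _ = ENNReal.ofReal (c3 ^ p) * ∫⁻ z,
            Δp z.1 * ∏ r, (‖z.2 r‖₊ : ℝ≥0∞) ^ p ∂(marginalUpTo μ i hik) :=
          lintegral_const_mul' _ _ ENNReal.ofReal_ne_top
      _ ≤ ENNReal.ofReal (c3 ^ p) * (ENNReal.ofReal (Ci i) * ∫⁻ x, Δp x ∂μ0) := by
          refine mul_le_mul_right ?_ _
          exact dom_transfer (marginalUpTo μ i hik) _ (hwmeas i) (ENNReal.ofReal (Ci i))
            μ0 (hdom' i hik) Δp hΔmeas
      _ ≤ ENNReal.ofReal (c3 ^ p) * (ENNReal.ofReal (Ci i) * ENNReal.ofReal (δ ^ p)) := by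
          refine mul_le_mul_right (mul_le_mul_right ?_ _) _
          have hφmeas : Measurable fun y : Fin N → ℝ =>
              (‖iteratedFDeriv ℝ i g y - iteratedFDeriv ℝ i f y‖₊ : ℝ≥0∞) ^ p :=
            (ENNReal.continuous_rpow_const.comp (ENNReal.continuous_coe.comp
              (continuous_nnnorm.comp ((hgcont i hik).sub
                (hfC.continuous_iteratedFDeriv (by exact_mod_cast hik)))))).measurable
          have heq : ∫⁻ x, Δp x ∂μ0 = ∫⁻ y,
              (‖iteratedFDeriv ℝ i g y - iteratedFDeriv ℝ i f y‖₊ : ℝ≥0∞) ^ p ∂ν := by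
            rw [hlmν _ hφmeas]
          rw [heq]
          exact (hferr i hik).le
      _ ≤ t := by
          rw [htdef, ← ENNReal.ofReal_mul (hCipos i hik).le,
            ← ENNReal.ofReal_mul (Real.rpow_nonneg hc3pos.le p)]
          refine ENNReal.ofReal_le_ofReal ?_
          have h1 : Ci i ≤ cC := hcCi i hik
          have h2 : c3 ^ p * Ci i * δ ^ p ≤ c3 ^ p * cC * δ ^ p :=
            mul_le_mul_of_nonneg_right
              (mul_le_mul_of_nonneg_left h1 (Real.rpow_nonneg hc3pos.le p))
              (Real.rpow_nonneg hδpos.le p)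
          calc c3 ^ p * (Ci i * δ ^ p) = c3 ^ p * Ci i * δ ^ p := by ring
            _ ≤ c3 ^ p * cC * δ ^ p := h2
            _ = Kr * δ ^ p := by rw [hKrdef]
            _ = (ε/3) ^ p := by rw [hδp]; field_simp
  -- combine via Minkowski's inequality
  have htri : ∀ z : X × (Fin i → X),
      (‖iteratedFDeriv ℝ i F z.1 z.2 -
        iteratedFDeriv ℝ i (fun x : X => D (f (E x))) z.1 z.2‖₊ : ℝ≥0∞) ≤
      (f1 + (f2 + f3)) z := by
    intro z
    have hdecomp : iteratedFDeriv ℝ i F z.1 z.2 -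
        iteratedFDeriv ℝ i (fun x : X => D (f (E x))) z.1 z.2 =
        (iteratedFDeriv ℝ i F z.1 z.2 - T m (iteratedFDeriv ℝ i F z.1 z.2)) +
        ((T m (iteratedFDeriv ℝ i F z.1 z.2) -
          iteratedFDeriv ℝ i (fun x : X => T m (F (S d x))) z.1 z.2) +
         (iteratedFDeriv ℝ i (fun x : X => T m (F (S d x))) z.1 z.2 -
          iteratedFDeriv ℝ i (fun x : X => D (f (E x))) z.1 z.2)) := by abel
    rw [hdecomp]
    simp only [hf1def, hf2def, hf3def, Pi.add_apply]
    exact_mod_cast (nnnorm_add_le _ _).trans (add_le_add_right (nnnorm_add_le _ _) _)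
  have hroot : ∀ {J : ℝ≥0∞}, J ≤ t → J ^ (1/p) ≤ ENNReal.ofReal (ε/3) := by
    intro J hJ
    have h1 : J ^ (1/p) ≤ t ^ (1/p) := ENNReal.rpow_le_rpow hJ (by positivity)
    refine h1.trans (le_of_eq ?_)
    rw [htdef, ← ENNReal.ofReal_rpow_of_nonneg (by positivity) (by positivity),
      ← ENNReal.rpow_mul, mul_one_div_cancel hp0.ne', ENNReal.rpow_one]
  have hrootlt : ∀ {J : ℝ≥0∞}, J < t → J ^ (1/p) < ENNReal.ofReal (ε/3) := by
    intro J hJ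
    have h1 : J ^ (1/p) < t ^ (1/p) := ENNReal.rpow_lt_rpow hJ (by positivity)
    refine h1.trans_le (le_of_eq ?_)
    rw [htdef, ← ENNReal.ofReal_rpow_of_nonneg (by positivity) (by positivity),
      ← ENNReal.rpow_mul, mul_one_div_cancel hp0.ne', ENNReal.rpow_one]
  have hmink : (∫⁻ z, (‖iteratedFDeriv ℝ i F z.1 z.2 -
        iteratedFDeriv ℝ i (fun x : X => D (f (E x))) z.1 z.2‖₊ : ℝ≥0∞) ^ p
        ∂(marginalUpTo μ i hik)) ^ (1/p) <
      ENNReal.ofReal ε := by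
    have h1 : (∫⁻ z, (‖iteratedFDeriv ℝ i F z.1 z.2 -
        iteratedFDeriv ℝ i (fun x : X => D (f (E x))) z.1 z.2‖₊ : ℝ≥0∞) ^ p
        ∂(marginalUpTo μ i hik)) ^ (1/p) ≤
        (∫⁻ z, ((f1 + (f2 + f3)) z) ^ p ∂(marginalUpTo μ i hik)) ^ (1/p) := by
      refine ENNReal.rpow_le_rpow (lintegral_mono fun z => ?_) (by positivity)
      exact ENNReal.rpow_le_rpow (htri z) hppos
    have h2 : (∫⁻ z, ((f1 + (f2 + f3)) z) ^ p ∂(marginalUpTo μ i hik)) ^ (1/p) ≤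
        (∫⁻ z, (f1 z) ^ p ∂(marginalUpTo μ i hik)) ^ (1/p) +
        (∫⁻ z, ((f2 + f3) z) ^ p ∂(marginalUpTo μ i hik)) ^ (1/p) :=
      ENNReal.lintegral_Lp_add_le hmf1.aemeasurable
        (hmf2.add hmf3).aemeasurable hp
    have h3 : (∫⁻ z, ((f2 + f3) z) ^ p ∂(marginalUpTo μ i hik)) ^ (1/p) ≤
        (∫⁻ z, (f2 z) ^ p ∂(marginalUpTo μ i hik)) ^ (1/p) +
        (∫⁻ z, (f3 z) ^ p ∂(marginalUpTo μ i hik)) ^ (1/p) :=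
      ENNReal.lintegral_Lp_add_le hmf2.aemeasurable hmf3.aemeasurable hp
    have hr1 := hrootlt hJ1
    have hr2 := hrootlt hJ2
    have hr3 := hroot hJ3
    have h23 : (∫⁻ z, ((f2 + f3) z) ^ p ∂(marginalUpTo μ i hik)) ^ (1/p) <
        ENNReal.ofReal (ε/3) + ENNReal.ofReal (ε/3) := by
      refine h3.trans_lt ?_
      calc (∫⁻ z, (f2 z) ^ p ∂(marginalUpTo μ i hik)) ^ (1/p) +
            (∫⁻ z, (f3 z) ^ p ∂(marginalUpTo μ i hik)) ^ (1/p)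
          ≤ (∫⁻ z, (f2 z) ^ p ∂(marginalUpTo μ i hik)) ^ (1/p) +
            ENNReal.ofReal (ε/3) := add_le_add_right hr3 _
        _ < ENNReal.ofReal (ε/3) + ENNReal.ofReal (ε/3) :=
            ENNReal.add_lt_add_right ENNReal.ofReal_ne_top hr2
    have hfin : (∫⁻ z, (f1 z) ^ p ∂(marginalUpTo μ i hik)) ^ (1/p) +
        (∫⁻ z, ((f2 + f3) z) ^ p ∂(marginalUpTo μ i hik)) ^ (1/p) <
        ENNReal.ofReal (ε/3) + (ENNReal.ofReal (ε/3) + ENNReal.ofReal (ε/3)) :=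
      ENNReal.add_lt_add hr1 h23
    refine (h1.trans h2).trans_lt (hfin.trans_le (le_of_eq ?_))
    rw [← ENNReal.ofReal_add (by positivity) (by positivity),
      ← ENNReal.ofReal_add (by positivity) (by positivity)]
    congr 1
    ring
  -- conclude
  set I : ℝ≥0∞ := ∫⁻ z, (‖iteratedFDeriv ℝ i F z.1 z.2 -
      iteratedFDeriv ℝ i (fun x : X => D (f (E x))) z.1 z.2‖₊ : ℝ≥0∞) ^ p
      ∂(marginalUpTo μ i hik) with hIdef
  calc I = (I ^ (1/p)) ^ p := by
        rw [← ENNReal.rpow_mul, one_div_mul_cancel hp0.ne', ENNReal.rpow_one]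
    _ < (ENNReal.ofReal ε) ^ p := ENNReal.rpow_lt_rpow hmink hp0
    _ = ENNReal.ofReal (ε ^ p) := ENNReal.ofReal_rpow_of_pos hε
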